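/- arXiv:1907.04640 — 3 statements merged into one kernel-verified Lean document; each statement's English description precedes it below -/
import Mathlib

section
/- For any distribution μ supported on a finite set A with |A| ≥ 2, letting d = ‖μ − U_A‖₁, one has log|A| − H(μ) ≤ (d/2)·log|A| + sqrt(2·log e · d · log|A|). -/
open Finset

/-- `μ` is a probability distribution on the finite type `A`. -/
def IsDist {A : Type*} [Fintype A] (μ : A → ℝ) : Prop :=
  (∀ a, 0 ≤ μ a) ∧ ∑ a, μ a = 1

/-- Base-2 Shannon entropy of a distribution. -/
noncomputable def shannonH {A : Type*} [Fintype A] (μ : A → ℝ) : ℝ :=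
  ∑ a, μ a * Real.logb 2 (μ a)⁻¹

/-- Pointwise bound used in the proof. -/
lemma ptwise (u m : ℝ) (hu : 0 < u) (hu1 : u ≤ 1) (hm0 : 0 ≤ m) (hm1 : m ≤ 1) :
    m * Real.log u⁻¹ + m * Real.log m ≤
      max (m - u) 0 * Real.log u⁻¹ +
        2 * Real.sqrt (Real.log u⁻¹) * Real.sqrt (u * max (m - u) 0) := by
  set L := Real.log u⁻¹ with hLdef
  have hLu : Real.log u = -L := by rw [hLdef, Real.log_inv]; ring
  have hL0 : 0 ≤ L := by
    rw [hLdef]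
    refine Real.log_nonneg ?_
    rw [le_inv_comm₀ one_pos hu]
    simpa using hu1
  rcases le_or_gt m u with hmu | hmu
  · -- small case: LHS ≤ 0 = RHS
    have hmax : max (m - u) 0 = 0 := max_eq_right (by linarith)
    rw [hmax]
    have hlhs : m * L + m * Real.log m ≤ 0 := by
      rcases eq_or_lt_of_le hm0 with h | h
      · simp [← h]
      · have : Real.log m ≤ Real.log u := Real.log_le_log h hmu
        nlinarith [this, hLu]
    simpa using hlhs.trans (by positivity)
  · -- big case
    have hmax : max (m - u) 0 = m - u := max_eq_left (by linarith)
    rw [hmax]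
    set e := m - u with hedef
    have he0 : 0 < e := by linarith
    have hm0' : 0 < m := by linarith
    have hlogm : Real.log m ≤ 0 := Real.log_nonpos hm0 hm1
    -- X := m log m - u log u ≤ e
    have hX1 : m * Real.log m - u * Real.log u ≤ e := by
      have h1 : Real.log (m / u) ≤ m / u - 1 :=
        Real.log_le_sub_one_of_pos (by positivity)
      have h2 : Real.log (m / u) = Real.log m - Real.log u :=
        Real.log_div (ne_of_gt hm0') (ne_of_gt hu)
      have h3 : u * (Real.log m - Real.log u) ≤ m - u := by
        rw [← h2]
        have := mul_le_mul_of_nonneg_left h1 hu.le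
        calc u * Real.log (m / u) ≤ u * (m / u - 1) := this
          _ = m - u := by field_simp
      nlinarith [mul_nonpos_of_nonneg_of_nonpos he0.le hlogm]
    -- X ≤ u L
    have hX2 : m * Real.log m - u * Real.log u ≤ u * L := by
      nlinarith [mul_nonpos_of_nonneg_of_nonpos hm0 hlogm, hLu]
    -- min ≤ sqrt
    have hsq : m * Real.log m - u * Real.log u ≤ Real.sqrt (L * (u * e)) := by
      rcases le_total e (u * L) with h | h
      · refine hX1.trans (Real.le_sqrt_of_sq_le ?_)
        nlinarith
      · refine hX2.trans (Real.le_sqrt_of_sq_le ?_)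
        nlinarith [mul_nonneg hu.le hL0]
    have hs : Real.sqrt (L * (u * e)) = Real.sqrt L * Real.sqrt (u * e) :=
      Real.sqrt_mul hL0 _
    have hsnn : 0 ≤ Real.sqrt L * Real.sqrt (u * e) := by positivity
    -- conclude
    have : m * L + m * Real.log m - e * L = m * Real.log m - u * Real.log u := by
      rw [hLu]; ring
    nlinarith [hsq, hs, hsnn]

/-- Upper bound: for `d = ‖μ − U_A‖₁`,
`log|A| − H(μ) ≤ (d/2)·log₂e·d·log|A|` style bound. -/
theorem entropy_deficiency_upper_bound {A : Type*} [Fintype A]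
    (hA : 2 ≤ Fintype.card A) (μ : A → ℝ) (hμ : IsDist μ)
    (d : ℝ) (hd : ∑ a, |μ a - ((Fintype.card A : ℝ))⁻¹| = d) :
    Real.logb 2 (Fintype.card A) - shannonH μ
      ≤ d / 2 * Real.logb 2 (Fintype.card A)
        + Real.sqrt (2 * Real.logb 2 (Real.exp 1) * d * Real.logb 2 (Fintype.card A)) := by
  obtain ⟨hpos, hsum⟩ := hμ
  have hn2 : (2 : ℝ) ≤ (Fintype.card A : ℝ) := by exact_mod_cast hA
  set n : ℝ := (Fintype.card A : ℝ) with hn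
  have hn1 : 1 < n := by linarith
  have hn0 : 0 < n := by linarith
  set u : ℝ := n⁻¹ with hudef
  have hu0 : 0 < u := inv_pos.mpr hn0
  have hu1 : u ≤ 1 := by rw [hudef]; exact inv_le_one_of_one_le₀ hn1.le
  have huinv : u⁻¹ = n := by rw [hudef, inv_inv]
  set L := Real.log n with hLdef
  have hL0 : 0 < L := Real.log_pos hn1
  have hLu : Real.log u⁻¹ = L := by rw [huinv]
  have hμ1 : ∀ a, μ a ≤ 1 := by
    intro a
    rw [← hsum]
    exact Finset.single_le_sum (fun b _ => hpos b) (Finset.mem_univ a)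
  have hd0 : 0 ≤ d := by
    rw [← hd]; exact Finset.sum_nonneg fun a _ => abs_nonneg _
  have hsumu : ∑ _a : A, u = 1 := by
    rw [Finset.sum_const, Finset.card_univ, nsmul_eq_mul, hudef]
    field_simp
    exact hn.symm
  have hsume : ∑ a, (μ a - u) = 0 := by
    rw [Finset.sum_sub_distrib, hsum, hsumu]; ring
  have hmaxsum : ∑ a, max (μ a - u) 0 = d / 2 := by
    have h : ∀ x : ℝ, max x 0 = (x + |x|) / 2 := by
      intro x
      rcases le_total x 0 with h | h
      · rw [max_eq_right h, abs_of_nonpos h]; ring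
      · rw [max_eq_left h, abs_of_nonneg h]; ring
    calc ∑ a, max (μ a - u) 0 = ∑ a, ((μ a - u) + |μ a - u|) / 2 := by
          exact Finset.sum_congr rfl fun a _ => h _
      _ = ((∑ a, (μ a - u)) + ∑ a, |μ a - u|) / 2 := by
          rw [← Finset.sum_add_distrib, Finset.sum_div]
      _ = d / 2 := by rw [hsume, hd]; ring
  -- Cauchy–Schwarz
  have hCS : ∑ a, Real.sqrt (u * max (μ a - u) 0) ≤ Real.sqrt (d / 2) := by
    have hnn : 0 ≤ ∑ a, Real.sqrt (u * max (μ a - u) 0) :=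
      Finset.sum_nonneg fun a _ => Real.sqrt_nonneg _
    refine Real.le_sqrt_of_sq_le ?_
    calc (∑ a, Real.sqrt (u * max (μ a - u) 0)) ^ 2
        = (∑ a, Real.sqrt u * Real.sqrt (max (μ a - u) 0)) ^ 2 := by
          congr 1
          exact Finset.sum_congr rfl fun a _ => Real.sqrt_mul hu0.le _
      _ ≤ (∑ _a : A, Real.sqrt u ^ 2) * ∑ a, Real.sqrt (max (μ a - u) 0) ^ 2 :=
          Finset.sum_mul_sq_le_sq_mul_sq _ _ _
      _ = (∑ _a : A, u) * ∑ a, max (μ a - u) 0 := by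
          rw [Real.sq_sqrt hu0.le]
          congr 1
          exact Finset.sum_congr rfl fun a _ => Real.sq_sqrt (le_max_right _ _)
      _ = d / 2 := by rw [hsumu, hmaxsum, one_mul]
  -- main bound in nats
  have hmain : L + ∑ a, μ a * Real.log (μ a) ≤ d / 2 * L + Real.sqrt (2 * d * L) := by
    have hLsum : L = ∑ a, μ a * L := by rw [← Finset.sum_mul, hsum, one_mul]
    have h4 : Real.sqrt (2 * d * L) = 2 * Real.sqrt L * Real.sqrt (d / 2) := by
      rw [show 2 * d * L = (2 * Real.sqrt (d/2) * Real.sqrt L)^2 by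
        rw [mul_pow, mul_pow, Real.sq_sqrt (by linarith), Real.sq_sqrt hL0.le]; ring]
      rw [Real.sqrt_sq (by positivity)]; ring
    calc L + ∑ a, μ a * Real.log (μ a)
        = ∑ a, (μ a * L + μ a * Real.log (μ a)) := by
          rw [Finset.sum_add_distrib, ← hLsum]
      _ ≤ ∑ a, (max (μ a - u) 0 * L +
            2 * Real.sqrt L * Real.sqrt (u * max (μ a - u) 0)) := by
          refine Finset.sum_le_sum fun a _ => ?_
          have := ptwise u (μ a) hu0 hu1 (hpos a) (hμ1 a)
          rwa [hLu] at this
      _ = (∑ a, max (μ a - u) 0) * L +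
            2 * Real.sqrt L * ∑ a, Real.sqrt (u * max (μ a - u) 0) := by
          rw [Finset.sum_add_distrib, ← Finset.sum_mul, ← Finset.mul_sum]
      _ ≤ d / 2 * L + 2 * Real.sqrt L * Real.sqrt (d / 2) := by
          rw [hmaxsum]
          have h2 : 0 ≤ 2 * Real.sqrt L := by positivity
          nlinarith [hCS]
      _ = d / 2 * L + Real.sqrt (2 * d * L) := by rw [h4]
  -- reduce goal to nats
  have hlog2 : 0 < Real.log 2 := Real.log_pos one_lt_two
  have hH : shannonH μ = -(∑ a, μ a * Real.log (μ a)) / Real.log 2 := by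
    unfold shannonH
    have hc : ∀ a ∈ Finset.univ, μ a * Real.logb 2 (μ a)⁻¹
        = -(μ a * Real.log (μ a)) / Real.log 2 := by
      intro a _
      rw [Real.logb, Real.log_inv]; ring
    rw [Finset.sum_congr rfl hc, ← Finset.sum_div, ← Finset.sum_neg_distrib]
  have hlb : Real.logb 2 n = L / Real.log 2 := by rw [Real.logb, hLdef]
  have hsq : Real.sqrt (2 * Real.logb 2 (Real.exp 1) * d * Real.logb 2 n)
      = Real.sqrt (2 * d * L) / Real.log 2 := by
    have h1 : 2 * Real.logb 2 (Real.exp 1) * d * Real.logb 2 n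
        = (2 * d * L) / (Real.log 2) ^ 2 := by
      rw [Real.logb, Real.logb, Real.log_exp, hLdef]
      field_simp
      try ring
      try tauto
    rw [h1, Real.sqrt_div (by positivity), Real.sqrt_sq hlog2.le]
  rw [hH, hsq, hlb]
  rw [show L / Real.log 2 - -(∑ a, μ a * Real.log (μ a)) / Real.log 2
      = (L + ∑ a, μ a * Real.log (μ a)) / Real.log 2 by ring]
  rw [show d / 2 * (L / Real.log 2) + Real.sqrt (2 * d * L) / Real.log 2
      = (d / 2 * L + Real.sqrt (2 * d * L)) / Real.log 2 by ring]
  exact (div_le_div_iff_of_pos_right hlog2).mpr hmain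
end

section
/- Let p = (1−δ)/2 and q = (1+δ)/2 with 0 < δ < 1. Then for all real a ≥ b > 0, q·a^{−log₂ q} + p·b^{−log₂ q} ≥ q·(a+b)^{−log₂ q}. -/
open Real Set in
private lemma sv_aux_diff (α : ℝ) (hα0 : 0 < α) (hα1 : α ≤ 1)
    (b : ℝ) (hb : 0 < b) (a : ℝ) (hab : b ≤ a) :
    (a + b) ^ α - a ^ α ≤ (2 * b) ^ α - b ^ α := by
  have hmono : MonotoneOn (fun x : ℝ => x ^ α - (x + b) ^ α) (Ici b) := by
    apply monotoneOn_of_deriv_nonneg (convex_Ici b)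
    · apply ContinuousOn.sub
      · exact (continuousOn_id).rpow_const fun x hx => Or.inr hα0.le
      · exact (continuousOn_id.add continuousOn_const).rpow_const
          fun x hx => Or.inr hα0.le
    · intro x hx
      rw [interior_Ici] at hx
      have hx0 : 0 < x := hb.trans hx
      have h1 : HasDerivAt (fun x : ℝ => x ^ α - (x + b) ^ α)
          (α * x ^ (α - 1) - 1 * α * (x + b) ^ (α - 1)) x :=
        (Real.hasDerivAt_rpow_const (Or.inl hx0.ne')).sub
          (((hasDerivAt_id x).add_const b).rpow_const (Or.inl (by positivity)))
      exact h1.differentiableAt.differentiableWithinAt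
    · intro x hx
      rw [interior_Ici] at hx
      have hx0 : 0 < x := hb.trans hx
      have h1 : HasDerivAt (fun x : ℝ => x ^ α - (x + b) ^ α)
          (α * x ^ (α - 1) - 1 * α * (x + b) ^ (α - 1)) x :=
        (Real.hasDerivAt_rpow_const (Or.inl hx0.ne')).sub
          (((hasDerivAt_id x).add_const b).rpow_const (Or.inl (by positivity)))
      rw [h1.deriv]
      have hle : (x + b) ^ (α - 1) ≤ x ^ (α - 1) :=
        Real.rpow_le_rpow_of_nonpos hx0 (by linarith) (by linarith)
      nlinarith [hα0.le]
  have := hmono (self_mem_Ici (a := b)) (show a ∈ Ici b from hab) hab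
  have h2 : b + b = 2 * b := by ring
  simp only [h2] at this
  linarith

/-- Key inequality: with `p = (1−δ)/2`, `q = (1+δ)/2` and `a ≥ b > 0`,
`q·a^(−log₂ q) + p·b^(−log₂ q) ≥ q·(a+b)^(−log₂ q)`. -/
theorem sv_key_inequality (δ : ℝ) (hδ0 : 0 < δ) (hδ1 : δ < 1)
    (a b : ℝ) (hb : 0 < b) (hab : b ≤ a) :
    ((1 + δ) / 2) * (a + b) ^ (-(Real.logb 2 ((1 + δ) / 2)))
      ≤ ((1 + δ) / 2) * a ^ (-(Real.logb 2 ((1 + δ) / 2)))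
        + ((1 - δ) / 2) * b ^ (-(Real.logb 2 ((1 + δ) / 2))) := by
  set q : ℝ := (1 + δ) / 2 with hq_def
  set α : ℝ := -(Real.logb 2 q) with hα_def
  have hq0 : 0 < q := by rw [hq_def]; linarith
  have hq1 : q < 1 := by rw [hq_def]; linarith
  have hqhalf : 1 / 2 < q := by rw [hq_def]; linarith
  -- α > 0
  have hα0 : 0 < α := by
    have := Real.logb_neg (b := 2) (by norm_num) hq0 hq1
    rw [hα_def]; linarith
  -- α ≤ 1
  have hα1 : α ≤ 1 := by
    have h1 : Real.logb 2 (1 / 2) < Real.logb 2 q :=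
      Real.logb_lt_logb (by norm_num) (by norm_num) hqhalf
    have h2 : Real.logb 2 (1 / 2) = -1 := by
      rw [show (1 / 2 : ℝ) = 2⁻¹ by norm_num, Real.logb_inv, Real.logb_self_eq_one] ; norm_num
    rw [hα_def]; linarith
  -- q * 2 ^ α = 1
  have hkey : q * (2 : ℝ) ^ α = 1 := by
    rw [hα_def, Real.rpow_neg (by norm_num), Real.rpow_logb (by norm_num) (by norm_num) hq0]
    field_simp
  have haux := sv_aux_diff α hα0 hα1 b hb a hab
  have h2b : (2 * b) ^ α = 2 ^ α * b ^ α :=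
    Real.mul_rpow (by norm_num) hb.le
  -- q * ((a+b)^α - a^α) ≤ q * ((2b)^α - b^α) = (1 - q) * b^α
  have hq2 : q * ((2 * b) ^ α - b ^ α) = (1 - q) * b ^ α := by
    rw [h2b]; linear_combination b ^ α * hkey
  have hstep : q * ((a + b) ^ α - a ^ α) ≤ (1 - q) * b ^ α := by
    rw [← hq2]
    exact mul_le_mul_of_nonneg_left haux hq0.le
  have hpq : (1 - δ) / 2 = 1 - q := by rw [hq_def]; ring
  rw [hpq]
  nlinarith [hstep]
end

section
/- The cosets Ham_d^i = {x + e_i : x ∈ Ham_d} for i = 0,1,…,2^d−1 (with e_0 = 0 and e_i the i-th standard basis vector) are pairwise disjoint and their union is all of {0,1}^{2^d−1}; i.e., the Hamming code is a perfect code. -/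
open Finset

/-- The parity-check matrix of the Hamming code: the `j`-th column is the binary
representation of `j+1` (columns are indexed by `1,…,2^d−1`). -/
def hammingMatrix (d : ℕ) (i : Fin d) (j : Fin (2 ^ d - 1)) : ZMod 2 :=
  if Nat.testBit ((j : ℕ) + 1) (i : ℕ) then 1 else 0

/-- Membership in the Hamming code of length `2^d − 1`. -/
def inHam (d : ℕ) (x : Fin (2 ^ d - 1) → ZMod 2) : Prop :=
  ∀ i : Fin d, ∑ j, hammingMatrix d i j * x j = 0

/-- `e_i` for `i ∈ {0,…,2^d−1}`: `e_0 = 0` and otherwise the standard basis vector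
with a `1` in the coordinate indexed by `i` (coordinates are labelled `1,…,2^d−1`). -/
def unitVec (d : ℕ) (i : Fin (2 ^ d)) (j : Fin (2 ^ d - 1)) : ZMod 2 :=
  if (j : ℕ) + 1 = (i : ℕ) then 1 else 0

lemma sum_bits_lt (f : ℕ → Bool) (d : ℕ) :
    (∑ k ∈ Finset.range d, (f k).toNat * 2 ^ k) < 2 ^ d := by
  induction d with
  | zero => simp
  | succ d ih =>
    rw [Finset.sum_range_succ, pow_succ]
    have h1 := Bool.toNat_le (f d)
    have h2 : (f d).toNat * 2 ^ d ≤ 1 * 2 ^ d := Nat.mul_le_mul_right _ h1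
    omega

lemma testBit_sum_bits (d : ℕ) : ∀ (f : ℕ → Bool) (i : ℕ), i < d →
    (∑ k ∈ Finset.range d, (f k).toNat * 2 ^ k).testBit i = f i := by
  induction d with
  | zero => omega
  | succ d ih =>
    intro f i hi
    have hrw : (∑ k ∈ Finset.range (d + 1), (f k).toNat * 2 ^ k) =
        2 * (∑ k ∈ Finset.range d, (f (k + 1)).toNat * 2 ^ k) + (f 0).toNat := by
      rw [Finset.sum_range_succ', Finset.mul_sum, pow_zero, mul_one]
      congr 1
      exact Finset.sum_congr rfl fun k _ => by ring
    rw [hrw]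
    cases i with
    | zero =>
      cases hf : f 0 <;> simp [hf, Nat.testBit_zero] <;> omega
    | succ i =>
      rw [Nat.testBit_add_one]
      have : (2 * (∑ k ∈ Finset.range d, (f (k + 1)).toNat * 2 ^ k) + (f 0).toNat) / 2 =
          ∑ k ∈ Finset.range d, (f (k + 1)).toNat * 2 ^ k := by
        have := Bool.toNat_le (f 0); omega
      rw [this, ih (fun k => f (k + 1)) i (by omega)]

lemma synd_unit (d : ℕ) (i : Fin (2 ^ d)) (k : Fin d) :
    ∑ j, hammingMatrix d k j * unitVec d i j =
      if Nat.testBit (i : ℕ) (k : ℕ) then 1 else 0 := by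
  by_cases hi : (i : ℕ) = 0
  · rw [Finset.sum_eq_zero, hi]
    · simp
    · intro j _
      simp [unitVec, hi]
  · have h1 : (i : ℕ) - 1 < 2 ^ d - 1 := by have := i.isLt; omega
    rw [Finset.sum_eq_single ⟨(i : ℕ) - 1, h1⟩]
    · have : ((⟨(i : ℕ) - 1, h1⟩ : Fin (2 ^ d - 1)) : ℕ) + 1 = (i : ℕ) := by
        simp; omega
      simp [hammingMatrix, unitVec, this]
    · intro j _ hj
      have : (j : ℕ) + 1 ≠ (i : ℕ) := by
        intro h
        apply hj
        apply Fin.ext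
        simp; omega
      simp [unitVec, this]
    · intro h
      exact absurd (Finset.mem_univ _) h

/-- The Hamming code is perfect: the cosets `Ham_d + e_i`, `i = 0,…,2^d−1`, are
pairwise disjoint and cover `{0,1}^{2^d−1}`; i.e. every `y` lies in exactly one coset. -/
theorem hamming_perfect (d : ℕ) (hd : 1 ≤ d) (y : Fin (2 ^ d - 1) → ZMod 2) :
    ∃! i : Fin (2 ^ d), ∃ x, inHam d x ∧ y = x + unitVec d i := by
  classical
  set s : Fin d → ZMod 2 := fun k => ∑ j, hammingMatrix d k j * y j with hs
  have h01 : ∀ z : ZMod 2, z = 0 ∨ z = 1 := by decide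
  -- characterization of membership in terms of the syndrome
  have key : ∀ i : Fin (2 ^ d),
      (∃ x, inHam d x ∧ y = x + unitVec d i) ↔
      (∀ k : Fin d, s k = if Nat.testBit (i : ℕ) (k : ℕ) then 1 else 0) := by
    intro i
    constructor
    · rintro ⟨x, hx, rfl⟩ k
      have : s k = ∑ j, hammingMatrix d k j * x j + ∑ j, hammingMatrix d k j * unitVec d i j := by
        rw [hs, ← Finset.sum_add_distrib]
        exact Finset.sum_congr rfl fun j _ => by simp [Pi.add_apply]; ring
      rw [this, hx k, zero_add, synd_unit]
    · intro h
      refine ⟨y - unitVec d i, fun k => ?_, by ring⟩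
      have : ∑ j, hammingMatrix d k j * (y - unitVec d i) j =
          s k - ∑ j, hammingMatrix d k j * unitVec d i j := by
        rw [hs, ← Finset.sum_sub_distrib]
        exact Finset.sum_congr rfl fun j _ => by simp [Pi.sub_apply]; ring
      rw [this, synd_unit, h k, sub_self]
  -- the decoded index
  set f : ℕ → Bool := fun k => if h : k < d then (s ⟨k, h⟩ = 1 : Prop) else False
  set n : ℕ := ∑ k ∈ Finset.range d, (f k).toNat * 2 ^ k with hn
  have hnlt : n < 2 ^ d := sum_bits_lt f d
  have hbit : ∀ k : Fin d, n.testBit (k : ℕ) = f (k : ℕ) := fun k =>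
    testBit_sum_bits d f k k.isLt
  refine ⟨⟨n, hnlt⟩, (key _).2 fun k => ?_, fun i hi => ?_⟩
  · rw [show ((⟨n, hnlt⟩ : Fin (2 ^ d)) : ℕ) = n from rfl, hbit k]
    rcases h01 (s k) with h | h
    · simp only [f, k.isLt, dif_pos]
      rw [h]
      norm_num
    · simp only [f, k.isLt, dif_pos]
      rw [h]
      norm_num
  · have hk := (key i).1 hi
    apply Fin.ext
    apply Nat.eq_of_testBit_eq
    intro k
    by_cases hkd : k < d
    · have := hk ⟨k, hkd⟩
      rw [show ((⟨n, hnlt⟩ : Fin (2 ^ d)) : ℕ) = n from rfl,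
        testBit_sum_bits d f k hkd]
      by_cases hb : Nat.testBit (i : ℕ) k
      · rw [hb]
        simp only [hb, if_true] at this
        simp [f, hkd, this]
      · simp only [Bool.not_eq_true] at hb
        rw [hb]
        simp only [hb, Bool.false_eq_true, if_false] at this
        simp [f, hkd, this]
    · have h1 : Nat.testBit (i : ℕ) k = false :=
        Nat.testBit_eq_false_of_lt (lt_of_lt_of_le i.isLt (Nat.pow_le_pow_right (by norm_num) (by omega)))
      have h2 : Nat.testBit n k = false :=
        Nat.testBit_eq_false_of_lt (lt_of_lt_of_le hnlt (Nat.pow_le_pow_right (by norm_num) (by omega)))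
      rw [show ((⟨n, hnlt⟩ : Fin (2 ^ d)) : ℕ) = n from rfl, h1, h2]
end
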